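/- Let G be an infinite connected bounded degree graph with critical percolation probability p_c ∈ (0,1], and fix x ∈ V. If there exists a finite constant C₁ such that E_p|C(x)| ≤ C₁ (p_c − p)^{−1} for all p < p_c, then there exists a finite constant C₂ such that E_{p_c}|B_I(x,n)| ≤ C₂ n for all positive integers n. -/

import Mathlib

open MeasureTheory ProbabilityTheory ENNReal NNReal

/-- The subgraph of `G` consisting of edges open in the configuration `ω`. -/
def openSubgraph {V : Type*} (G : SimpleGraph V) (ω : Sym2 V → Bool) : SimpleGraph V :=
  G.deleteEdges {e | ω e = false}

/-- `x` is connected to `y` by an open path of at most `n` edges. -/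
def ConnWithin {V : Type*} (G : SimpleGraph V) (ω : Sym2 V → Bool) (x y : V) (n : ℕ) : Prop :=
  ∃ w : (openSubgraph G ω).Walk x y, w.length ≤ n

/-- The open cluster of `x`. -/
def cluster {V : Type*} (G : SimpleGraph V) (ω : Sym2 V → Bool) (x : V) : Set V :=
  {y | (openSubgraph G ω).Reachable x y}

/-- The intrinsic ball of radius `n` at `x`. -/
def intrinsicBall {V : Type*} (G : SimpleGraph V) (ω : Sym2 V → Bool) (x : V) (n : ℕ) : Set V :=
  {y | ConnWithin G ω x y n}

/-- `μ` is the product Bernoulli (bond percolation) measure with parameter `p`: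
coordinates are independent and each edge is open with probability `p`. -/
def IsBernoulliPercolation {V : Type*} (μ : Measure (Sym2 V → Bool)) (p : ℝ) : Prop :=
  IsProbabilityMeasure μ ∧
  iIndepFun (fun e (ω : Sym2 V → Bool) => ω e) μ ∧
  ∀ e : Sym2 V, μ {ω | ω e = true} = ENNReal.ofReal p


open scoped Classical
open Finset


section FiniteLemma
variable {ι : Type*} [Fintype ι] [DecidableEq ι]

noncomputable def cweight (p : ℝ≥0∞) (ψ : ι → Bool) : ℝ≥0∞ :=
  ∏ e, (if ψ e then p else 1 - p)

noncomputable def jw (p q : ℝ≥0∞) : Bool → Bool → ℝ≥0∞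
  | true, true => q
  | true, false => p - q
  | false, true => 0
  | false, false => 1 - p

lemma jw_sum_right (p q : ℝ≥0∞) (hq : q ≤ p) (a : Bool) :
    (jw p q a true + jw p q a false) = if a then p else 1 - p := by
  cases a <;> simp [jw, add_tsub_cancel_of_le hq]

lemma jw_sum_left (p q : ℝ≥0∞) (hq : q ≤ p) (hp : p ≤ 1) (b : Bool) :
    (jw p q true b + jw p q false b) = if b then q else 1 - q := by
  cases b
  · simp only [jw, Bool.false_eq_true, if_false]
    rw [add_comm, tsub_add_tsub_cancel hp hq]
  · simp [jw]

lemma key_finite (n : ℕ) (p q : ℝ≥0∞) (hq0 : q ≠ 0) (hqp : q ≤ p) (hp1 : p ≤ 1)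
    (A : Finset (ι → Bool))
    (hW : ∀ ψ ∈ A, ∃ S : Finset ι, S.card ≤ n ∧ (∀ e ∈ S, ψ e = true) ∧
      ∀ φ : ι → Bool, (∀ e ∈ S, φ e = true) → φ ∈ A) :
    ∑ ψ ∈ A, cweight p ψ ≤ (p / q) ^ n * ∑ ψ ∈ A, cweight q ψ := by
  classical
  have hp0 : p ≠ 0 := fun h => hq0 (le_antisymm (h ▸ hqp) (zero_le : 0 ≤ q))
  have hpt : p ≠ ⊤ := (lt_of_le_of_lt hp1 one_lt_top).ne
  have hqt : q ≠ ⊤ := (lt_of_le_of_lt (hqp.trans hp1) one_lt_top).ne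
  choose S hScard hStrue hSwit using hW
  set J : (ι → Bool) → (ι → Bool) → ℝ≥0∞ := fun ψ φ => ∏ e, jw p q (ψ e) (φ e) with hJ
  have hmargR : ∀ ψ : ι → Bool, ∑ φ : ι → Bool, J ψ φ = cweight p ψ := by
    intro ψ
    have := Finset.prod_univ_sum (fun _ : ι => (Finset.univ : Finset Bool))
      (fun e b => jw p q (ψ e) b)
    rw [cweight]
    rw [show (∑ φ : ι → Bool, J ψ φ) = ∑ φ ∈ Fintype.piFinset (fun _ : ι => (Finset.univ : Finset Bool)), ∏ e, jw p q (ψ e) (φ e) by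
      rw [Fintype.piFinset_univ]]
    rw [← this]
    refine Finset.prod_congr rfl fun e _ => ?_
    rw [show (∑ b ∈ (Finset.univ : Finset Bool), jw p q (ψ e) b) = jw p q (ψ e) true + jw p q (ψ e) false by
      simp [Fintype.sum_bool]]
    exact jw_sum_right p q hqp (ψ e)
  have hmargL : ∀ φ : ι → Bool, ∑ ψ : ι → Bool, J ψ φ = cweight q φ := by
    intro φ
    have := Finset.prod_univ_sum (fun _ : ι => (Finset.univ : Finset Bool))
      (fun e a => jw p q a (φ e))
    rw [cweight]
    rw [show (∑ ψ : ι → Bool, J ψ φ) = ∑ ψ ∈ Fintype.piFinset (fun _ : ι => (Finset.univ : Finset Bool)), ∏ e, jw p q (ψ e) (φ e) by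
      rw [Fintype.piFinset_univ]]
    rw [← this]
    refine Finset.prod_congr rfl fun e _ => ?_
    rw [show (∑ a ∈ (Finset.univ : Finset Bool), jw p q a (φ e)) = jw p q true (φ e) + jw p q false (φ e) by
      simp [Fintype.sum_bool]]
    exact jw_sum_left p q hqp hp1 (φ e)
  -- constrained sum T ψ
  set T : ∀ ψ ∈ A, ℝ≥0∞ := fun ψ hψ =>
    ∑ φ : ι → Bool, ∏ e, (if e ∈ S ψ hψ then (if φ e then jw p q (ψ e) (φ e) else 0)
      else jw p q (ψ e) (φ e)) with hT
  have hTval : ∀ ψ (hψ : ψ ∈ A), T ψ hψ = (q / p) ^ (S ψ hψ).card * cweight p ψ := by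
    intro ψ hψ
    have h1 : T ψ hψ = ∏ e, (if e ∈ S ψ hψ then q else (if ψ e then p else 1 - p)) := by
      rw [hT]; dsimp only
      rw [show (∑ φ : ι → Bool, ∏ e, (if e ∈ S ψ hψ then (if φ e then jw p q (ψ e) (φ e) else 0)
            else jw p q (ψ e) (φ e)))
          = ∑ φ ∈ Fintype.piFinset (fun _ : ι => (Finset.univ : Finset Bool)),
            ∏ e, (if e ∈ S ψ hψ then (if φ e then jw p q (ψ e) (φ e) else 0)
            else jw p q (ψ e) (φ e)) by rw [Fintype.piFinset_univ]]
      rw [← Finset.prod_univ_sum (fun _ : ι => (Finset.univ : Finset Bool))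
        (fun e b => if e ∈ S ψ hψ then (if b then jw p q (ψ e) b else 0) else jw p q (ψ e) b)]
      refine Finset.prod_congr rfl fun e _ => ?_
      by_cases he : e ∈ S ψ hψ
      · simp only [he, if_true]
        rw [show (∑ b ∈ (Finset.univ : Finset Bool), (if b then jw p q (ψ e) b else 0))
            = jw p q (ψ e) true + 0 by simp [Fintype.sum_bool]]
        rw [hStrue ψ hψ e he]
        simp [jw]
      · simp only [he, if_false]
        rw [show (∑ b ∈ (Finset.univ : Finset Bool), jw p q (ψ e) b) = jw p q (ψ e) true + jw p q (ψ e) false by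
          simp [Fintype.sum_bool]]
        exact jw_sum_right p q hqp (ψ e)
    rw [h1, cweight]
    rw [show ((q / p) ^ (S ψ hψ).card : ℝ≥0∞) = ∏ e, (if e ∈ S ψ hψ then q / p else 1) by
      rw [Finset.prod_ite_mem, Finset.univ_inter, Finset.prod_const]]
    rw [← Finset.prod_mul_distrib]
    refine Finset.prod_congr rfl fun e _ => ?_
    by_cases he : e ∈ S ψ hψ
    · simp only [he, if_true, hStrue ψ hψ e he]
      rw [ENNReal.div_mul_cancel hp0 hpt]
    · simp [he]
  -- T ψ ≤ ∑ over φ ∈ A of J ψ φ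
  have hTle : ∀ ψ (hψ : ψ ∈ A), T ψ hψ ≤ ∑ φ ∈ A, J ψ φ := by
    intro ψ hψ
    rw [hT, show (∑ φ ∈ A, J ψ φ) = ∑ φ : ι → Bool, (if φ ∈ A then J ψ φ else 0) by
      rw [Finset.sum_ite_mem, Finset.univ_inter]]
    refine Finset.sum_le_sum fun φ _ => ?_
    by_cases hall : ∀ e ∈ S ψ hψ, φ e = true
    · have hφA : φ ∈ A := hSwit ψ hψ φ hall
      rw [if_pos hφA, hJ]
      refine le_of_eq (Finset.prod_congr rfl fun e _ => ?_)
      by_cases he : e ∈ S ψ hψ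
      · simp [he, hall e he]
      · simp [he]
    · push_neg at hall
      obtain ⟨e, he, hfe⟩ := hall
      refine le_trans (le_of_eq ?_) zero_le
      refine Finset.prod_eq_zero (Finset.mem_univ e) ?_
      simp [he, hfe]
  -- chain
  have hchain : (q / p) ^ n * ∑ ψ ∈ A, cweight p ψ ≤ ∑ φ ∈ A, cweight q φ := by
    calc (q / p) ^ n * ∑ ψ ∈ A, cweight p ψ
        = ∑ ψ ∈ A, (q / p) ^ n * cweight p ψ := by rw [Finset.mul_sum]
      _ ≤ ∑ ψ ∈ A.attach, T ψ.1 ψ.2 := by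
          rw [← Finset.sum_attach A (fun ψ => (q / p) ^ n * cweight p ψ)]
          refine Finset.sum_le_sum fun ψ _ => ?_
          rw [hTval ψ.1 ψ.2]
          refine mul_le_mul_left ?_ _
          exact pow_le_pow_of_le_one zero_le (by rw [ENNReal.div_le_iff hp0 hpt]; simpa using hqp) (hScard ψ.1 ψ.2)
      _ ≤ ∑ ψ ∈ A.attach, ∑ φ ∈ A, J ψ.1 φ := Finset.sum_le_sum fun ψ _ => hTle ψ.1 ψ.2
      _ = ∑ ψ ∈ A, ∑ φ ∈ A, J ψ φ := Finset.sum_attach A (fun ψ => ∑ φ ∈ A, J ψ φ)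
      _ ≤ ∑ ψ : ι → Bool, ∑ φ ∈ A, J ψ φ := Finset.sum_le_sum_of_subset (Finset.subset_univ A)
      _ = ∑ φ ∈ A, ∑ ψ : ι → Bool, J ψ φ := Finset.sum_comm
      _ = ∑ φ ∈ A, cweight q φ := Finset.sum_congr rfl fun φ _ => hmargL φ
  -- conclude
  have hqp0 : (q / p : ℝ≥0∞) ≠ 0 := by
    simp [ENNReal.div_eq_zero_iff, hq0, hpt]
  have hqpt : (q / p : ℝ≥0∞) ≠ ⊤ := by
    simp [ENNReal.div_eq_top, hq0, hp0, hqt]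
  rw [show ((p / q) ^ n : ℝ≥0∞) = ((q / p) ^ n)⁻¹ by
    rw [ENNReal.inv_pow, ENNReal.inv_div (Or.inl hpt) (Or.inl hp0)]]
  rw [← ENNReal.div_eq_inv_mul]
  rw [ENNReal.le_div_iff_mul_le (Or.inl (pow_ne_zero n hqp0)) (Or.inl (pow_ne_top hqpt))]
  rw [mul_comm]
  exact hchain
end FiniteLemma

section Graph
variable {V : Type*} (G : SimpleGraph V) (x : V)

/-- vertex ball of radius n around x -/
def gball (n : ℕ) : Set V := {y | ∃ w : G.Walk x y, w.length ≤ n}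

lemma gball_finite (D : ℕ) (hD : ∀ v : V, (G.neighborSet v).encard ≤ D) (n : ℕ) :
    (gball G x n).Finite := by
  induction n with
  | zero =>
    refine Set.Finite.subset (Set.finite_singleton x) ?_
    rintro y ⟨w, hw⟩
    have := w.eq_of_length_eq_zero (Nat.le_zero.mp hw)
    simp [this.symm]
  | succ n ih =>
    refine Set.Finite.subset (ih.union (Set.Finite.biUnion ih
      (fun z _ => Set.finite_of_encard_le_coe (hD z)))) ?_
    rintro y ⟨w, hw⟩
    cases hrev : w.reverse with
    | nil =>
      have h0 : w.length = 0 := by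
        have := congrArg SimpleGraph.Walk.length hrev
        simpa [SimpleGraph.Walk.length_reverse] using this
      left
      exact ⟨w, by omega⟩
    | @cons _ z _ h p =>
      right
      have hlen : p.length ≤ n := by
        have := congrArg SimpleGraph.Walk.length hrev
        simp [SimpleGraph.Walk.length_reverse] at this
        omega
      refine Set.mem_biUnion (show z ∈ gball G x n from ⟨p.reverse, by simpa using hlen⟩) ?_
      exact h.symm

lemma mem_edgeSet_open {ω : Sym2 V → Bool} {e : Sym2 V}
    (h : e ∈ (openSubgraph G ω).edgeSet) : e ∈ G.edgeSet ∧ ω e = true := by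
  rw [openSubgraph, SimpleGraph.edgeSet_deleteEdges] at h
  refine ⟨h.1, ?_⟩
  have := h.2
  simp only [Set.mem_setOf_eq] at this
  exact eq_true_of_ne_false (by simpa using this)

lemma openSubgraph_walk_props {ω : Sym2 V → Bool} {y : V} {n : ℕ}
    (w : (openSubgraph G ω).Walk x y) (hw : w.length ≤ n) :
    ∀ e ∈ w.edges, (∀ v ∈ e, v ∈ gball G x n) ∧ ω e = true ∧ e ∈ G.edgeSet := by
  classical
  intro e he
  obtain ⟨heG, hopen⟩ := mem_edgeSet_open G (w.edges_subset_edgeSet he)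
  refine ⟨?_, hopen, heG⟩
  intro v hv
  have hsup : v ∈ w.support := by
    induction e with
    | _ a b =>
      rcases Sym2.mem_iff.mp hv with rfl | rfl
      · exact w.fst_mem_support_of_mem_edges he
      · exact w.snd_mem_support_of_mem_edges he
  have htk := w.length_takeUntil_le hsup
  refine ⟨((w.takeUntil v hsup).transfer G ?_), ?_⟩
  · intro e' he'
    exact (mem_edgeSet_open G ((w.takeUntil v hsup).edges_subset_edgeSet he')).1
  · rw [SimpleGraph.Walk.length_transfer]
    omega

/-- transfer a walk to another configuration agreeing on its edges -/
lemma connWithin_of_agree {ω ω' : Sym2 V → Bool} {y : V} {n : ℕ}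
    (h : ConnWithin G ω x y n)
    (hagree : ∀ e : Sym2 V, (∀ v ∈ e, v ∈ gball G x n) → e ∈ G.edgeSet → ω e = ω' e) :
    ConnWithin G ω' x y n := by
  obtain ⟨w, hw⟩ := h
  have hprops := openSubgraph_walk_props G x w hw
  refine ⟨w.transfer (openSubgraph G ω') ?_, by rw [SimpleGraph.Walk.length_transfer]; exact hw⟩
  intro e he
  obtain ⟨hball, hopen, heG⟩ := hprops e he
  rw [openSubgraph, SimpleGraph.edgeSet_deleteEdges]
  refine ⟨heG, ?_⟩
  simp only [Set.mem_setOf_eq]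
  rw [← hagree e hball heG, hopen]
  simp

lemma intrinsicBall_subset_gball {ω : Sym2 V → Bool} {n : ℕ} :
    {y | ConnWithin G ω x y n} ⊆ gball G x n := by
  rintro y ⟨w, hw⟩
  refine ⟨w.transfer G (fun e he => (mem_edgeSet_open G (w.edges_subset_edgeSet he)).1), ?_⟩
  rw [SimpleGraph.Walk.length_transfer]; exact hw

end Graph

section Meas
variable {V : Type*} (μ : Measure (Sym2 V → Bool)) (q : ℝ)

/-- extension of a pattern on E₀ by false -/
noncomputable def extCfg (E₀ : Finset (Sym2 V)) (χ : {e // e ∈ E₀} → Bool) : Sym2 V → Bool :=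
  fun e => if h : e ∈ E₀ then χ ⟨e, h⟩ else false

lemma marginal_meas (hBer : IsBernoulliPercolation μ q) (e : Sym2 V) (b : Bool) :
    μ ((fun ω : Sym2 V → Bool => ω e) ⁻¹' {b})
      = if b then ENNReal.ofReal q else 1 - ENNReal.ofReal q := by
  obtain ⟨hprob, _, hmarg⟩ := hBer
  have htrue : ((fun ω : Sym2 V → Bool => ω e) ⁻¹' {true}) = {ω | ω e = true} := by
    ext ω; simp
  cases b
  · have : ((fun ω : Sym2 V → Bool => ω e) ⁻¹' {false})
        = {ω : Sym2 V → Bool | ω e = true}ᶜ := by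
      ext ω; simp
    rw [this]
    have hms : MeasurableSet {ω : Sym2 V → Bool | ω e = true} := by
      rw [← htrue]
      exact (measurable_pi_apply e) (measurableSet_singleton true)
    rw [prob_compl_eq_one_sub hms, hmarg e]
    simp
  · rw [htrue, hmarg e]; simp

lemma cyl_measurable (E₀ : Finset (Sym2 V)) (χ : {e // e ∈ E₀} → Bool) :
    MeasurableSet {ω : Sym2 V → Bool | ∀ e : {e // e ∈ E₀}, ω e = χ e} := by
  have : {ω : Sym2 V → Bool | ∀ e : {e // e ∈ E₀}, ω e = χ e}
      = ⋂ e : {e // e ∈ E₀}, (fun ω : Sym2 V → Bool => ω e) ⁻¹' {χ e} := by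
    ext ω; simp
  rw [this]
  exact MeasurableSet.iInter fun e =>
    (measurable_pi_apply (e : Sym2 V)) (measurableSet_singleton (χ e))

lemma cyl_measure (hBer : IsBernoulliPercolation μ q) (E₀ : Finset (Sym2 V))
    (χ : {e // e ∈ E₀} → Bool) :
    μ {ω : Sym2 V → Bool | ∀ e : {e // e ∈ E₀}, ω e = χ e}
      = ∏ e : {e // e ∈ E₀}, (if χ e then ENNReal.ofReal q else 1 - ENNReal.ofReal q) := by
  classical
  have hset : {ω : Sym2 V → Bool | ∀ e : {e // e ∈ E₀}, ω e = χ e}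
      = ⋂ e ∈ E₀, (fun ω : Sym2 V → Bool => ω e) ⁻¹' {extCfg E₀ χ e} := by
    ext ω
    simp only [Set.mem_setOf_eq, Set.mem_iInter, Set.mem_preimage, Set.mem_singleton_iff]
    constructor
    · intro h e he
      rw [extCfg, dif_pos he]; exact h ⟨e, he⟩
    · intro h e
      have := h e.1 e.2
      rwa [extCfg, dif_pos e.2] at this
  rw [hset]
  rw [hBer.2.1.measure_inter_preimage_eq_mul E₀
    (sets := fun e => {extCfg E₀ χ e}) (fun e _ => measurableSet_singleton _)]
  rw [← Finset.prod_coe_sort E₀ (fun e => μ ((fun ω : Sym2 V → Bool => ω e) ⁻¹' {extCfg E₀ χ e}))]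
  refine Finset.prod_congr rfl fun e _ => ?_
  rw [marginal_meas μ q hBer e.1 (extCfg E₀ χ e.1)]
  have : extCfg E₀ χ e.1 = χ e := by rw [extCfg, dif_pos e.2]
  rw [this]

/-- decomposition of a local event -/
lemma event_decomp (hBer : IsBernoulliPercolation μ q) (E₀ : Finset (Sym2 V))
    (A : Set (Sym2 V → Bool))
    (hdep : ∀ ω ω' : Sym2 V → Bool, (∀ e ∈ E₀, ω e = ω' e) → ω ∈ A → ω' ∈ A) :
    MeasurableSet A ∧
    μ A = (Finset.univ.filter (fun χ : {e // e ∈ E₀} → Bool => extCfg E₀ χ ∈ A)).sum (fun χ => ∏ e : {e // e ∈ E₀}, (if χ e then ENNReal.ofReal q else 1 - ENNReal.ofReal q)) := by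
  classical
  set Apat := Finset.univ.filter (fun χ : {e // e ∈ E₀} → Bool => extCfg E₀ χ ∈ A) with hApat
  set Cyl : ({e // e ∈ E₀} → Bool) → Set (Sym2 V → Bool) :=
    fun χ => {ω | ∀ e : {e // e ∈ E₀}, ω e = χ e} with hCyl
  have hA : A = ⋃ χ ∈ Apat, Cyl χ := by
    ext ω
    simp only [Set.mem_iUnion, hApat, Finset.mem_filter, Finset.mem_univ, true_and]
    constructor
    · intro hω
      refine ⟨fun e => ω e, ?_, fun e => rfl⟩
      refine hdep ω _ (fun e he => ?_) hω
      rw [extCfg, dif_pos he]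
    · rintro ⟨χ, hχA, hωχ⟩
      refine hdep (extCfg E₀ χ) ω (fun e he => ?_) hχA
      rw [extCfg, dif_pos he, hωχ ⟨e, he⟩]
  have hdisj : (↑Apat : Set ({e // e ∈ E₀} → Bool)).PairwiseDisjoint Cyl := by
    intro χ _ χ' _ hne
    rw [Function.onFun, Set.disjoint_left]
    intro ω hω hω'
    exact hne (funext fun e => by rw [← hω e, hω' e])
  have hmeas : ∀ χ ∈ Apat, MeasurableSet (Cyl χ) := fun χ _ => cyl_measurable E₀ χ
  constructor
  · rw [hA]; exact Apat.measurableSet_biUnion hmeas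
  · rw [hA, measure_biUnion_finset hdisj hmeas]
    exact Finset.sum_congr rfl fun χ _ => cyl_measure μ q hBer E₀ χ
end Meas

/-- Main theorem: if `E_p|C(x)| ≤ C₁ (p_c - p)⁻¹` for all `p < p_c`, then
`E_{p_c}|B_I(x,n)| ≤ C₂ n`. -/
theorem stmt4 {V : Type*} [Infinite V] (G : SimpleGraph V) (hconn : G.Connected)
    (D : ℕ) (hD : ∀ v : V, (G.neighborSet v).encard ≤ D)
    (x : V)
    (μ : ℝ → Measure (Sym2 V → Bool))
    (hμ : ∀ q : ℝ, 0 ≤ q → q ≤ 1 → IsBernoulliPercolation (μ q) q)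
    (p_c : ℝ) (hpc0 : 0 < p_c) (hpc1 : p_c ≤ 1)
    (hpcdef : p_c = sInf {q : ℝ | 0 ≤ q ∧ q ≤ 1 ∧ 0 < μ q {ω | (cluster G ω x).Infinite}})
    (C₁ : ℝ≥0)
    (hC₁ : ∀ q : ℝ, 0 ≤ q → q < p_c →
      ∫⁻ ω, ((cluster G ω x).encard : ℝ≥0∞) ∂(μ q)
        ≤ (C₁ : ℝ≥0∞) * (ENNReal.ofReal (p_c - q))⁻¹) :
    ∃ C₂ : ℝ≥0, ∀ n : ℕ, 0 < n →
      ∫⁻ ω, ((intrinsicBall G ω x n).encard : ℝ≥0∞) ∂(μ p_c) ≤ (C₂ : ℝ≥0∞) * n := by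
  classical
  refine ⟨4 * C₁ * (Real.toNNReal p_c)⁻¹, fun n hn => ?_⟩
  -- the sprinkled parameter
  set q : ℝ := p_c * (1 - 1/(2*n)) with hqdef
  have hhalf : (1:ℝ)/2 ≤ 1 - 1/(2*n) := by
    have h2n : (1:ℝ) ≤ n := by exact_mod_cast hn
    have : (1:ℝ)/(2*n) ≤ 1/2 := one_div_le_one_div_of_le (by norm_num) (by linarith)
    linarith
  have hq0 : 0 < q := by
    apply mul_pos hpc0; linarith
  have hqlt : q < p_c := by
    have : 1 - 1/(2*(n:ℝ)) < 1 := by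
      have : 0 < 1/(2*(n:ℝ)) := by positivity
      linarith
    calc q < p_c * 1 := by apply mul_lt_mul_of_pos_left this hpc0
    _ = p_c := mul_one p_c
  have hq1 : q ≤ 1 := le_of_lt (lt_of_lt_of_le hqlt hpc1)
  have Bpc := hμ p_c hpc0.le hpc1
  have Bq := hμ q hq0.le hq1
  -- finite ball and edge set
  set BF : Finset V := (gball_finite G x D hD n).toFinset with hBF
  set E₀ : Finset (Sym2 V) := (BF ×ˢ BF).image (fun z : V × V => s(z.1, z.2)) with hE₀
  have hE₀mem : ∀ e : Sym2 V, (∀ v ∈ e, v ∈ gball G x n) → e ∈ E₀ := by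
    intro e
    induction e with
    | _ a b =>
      intro h
      have ha : a ∈ BF := by
        rw [hBF, Set.Finite.mem_toFinset]; exact h a (Sym2.mem_mk_left a b)
      have hb : b ∈ BF := by
        rw [hBF, Set.Finite.mem_toFinset]; exact h b (Sym2.mem_mk_right a b)
      rw [hE₀]
      exact Finset.mem_image.mpr ⟨(a, b), Finset.mem_product.mpr ⟨ha, hb⟩, rfl⟩
  -- the events
  set A : V → Set (Sym2 V → Bool) := fun y => {ω | ConnWithin G ω x y n} with hAdef
  have hdep : ∀ y, ∀ ω ω' : Sym2 V → Bool, (∀ e ∈ E₀, ω e = ω' e) → ω ∈ A y → ω' ∈ A y := by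
    intro y ω ω' hagree hω
    exact connWithin_of_agree G x hω (fun e hball heG => hagree e (hE₀mem e hball))
  have hApc := fun y => event_decomp (μ p_c) p_c Bpc E₀ (A y) (hdep y)
  have hAq := fun y => event_decomp (μ q) q Bq E₀ (A y) (hdep y)
  have hAmeas : ∀ y, MeasurableSet (A y) := fun y => (hApc y).1
  -- the witness structure for key_finite
  have hW : ∀ y, ∀ χ ∈ Finset.univ.filter (fun χ : {e // e ∈ E₀} → Bool => extCfg E₀ χ ∈ A y),
      ∃ S : Finset {e // e ∈ E₀}, S.card ≤ n ∧ (∀ e ∈ S, χ e = true) ∧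
      ∀ φ : {e // e ∈ E₀} → Bool, (∀ e ∈ S, φ e = true) →
        φ ∈ Finset.univ.filter (fun χ : {e // e ∈ E₀} → Bool => extCfg E₀ χ ∈ A y) := by
    intro y χ hχ
    rw [Finset.mem_filter] at hχ
    obtain ⟨w, hwlen⟩ := hχ.2
    have hprops := openSubgraph_walk_props G x w hwlen
    refine ⟨Finset.univ.filter (fun e : {e // e ∈ E₀} => (e : Sym2 V) ∈ w.edges), ?_, ?_, ?_⟩
    · calc (Finset.univ.filter (fun e : {e // e ∈ E₀} => (e : Sym2 V) ∈ w.edges)).card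
          ≤ w.edges.toFinset.card := by
            refine Finset.card_le_card_of_injOn (fun e => (e : Sym2 V)) ?_ ?_
            · intro e he
              simpa using he
            · intro e _ e' _ hee; exact Subtype.ext hee
      _ ≤ w.edges.length := w.edges.toFinset_card_le
      _ ≤ n := by rw [SimpleGraph.Walk.length_edges]; exact hwlen
    · intro e he
      rw [Finset.mem_filter] at he
      have := (hprops e he.2).2.1
      rwa [extCfg, dif_pos e.2] at this
    · intro φ hφ
      rw [Finset.mem_filter]
      refine ⟨Finset.mem_univ φ, ?_⟩
      refine ⟨w.transfer (openSubgraph G (extCfg E₀ φ)) ?_, by rw [SimpleGraph.Walk.length_transfer]; exact hwlen⟩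
      intro e he
      obtain ⟨hball, hopen, heG⟩ := hprops e he
      have heE : e ∈ E₀ := hE₀mem e hball
      rw [openSubgraph, SimpleGraph.edgeSet_deleteEdges]
      refine ⟨heG, ?_⟩
      have : extCfg E₀ φ e = true := by
        rw [extCfg, dif_pos heE]
        exact hφ ⟨e, heE⟩ (Finset.mem_filter.mpr ⟨Finset.mem_univ _, he⟩)
      simp [this]
  -- per-vertex comparison
  have hratio : ∀ y, μ p_c (A y)
      ≤ (ENNReal.ofReal p_c / ENNReal.ofReal q) ^ n * μ q (A y) := by
    intro y
    rw [(hApc y).2, (hAq y).2]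
    have := key_finite (ι := {e // e ∈ E₀}) n (ENNReal.ofReal p_c) (ENNReal.ofReal q)
      (by simp [ENNReal.ofReal_eq_zero]; exact hq0)
      (ENNReal.ofReal_le_ofReal hqlt.le)
      (by rw [← ENNReal.ofReal_one]; exact ENNReal.ofReal_le_ofReal hpc1)
      (Finset.univ.filter (fun χ : {e // e ∈ E₀} → Bool => extCfg E₀ χ ∈ A y)) (hW y)
    simpa [cweight, ENNReal.div_eq_inv_mul] using this
  -- integral = sum over ball
  have hptwise : ∀ m : Measure (Sym2 V → Bool), ∀ ω : Sym2 V → Bool,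
      ((intrinsicBall G ω x n).encard : ℝ≥0∞)
        = ∑ y ∈ BF, Set.indicator (A y) (fun _ => (1:ℝ≥0∞)) ω := by
    intro m ω
    have hsub : intrinsicBall G ω x n ⊆ ↑BF := by
      rw [hBF, Set.Finite.coe_toFinset]
      exact intrinsicBall_subset_gball G x
    have hset : intrinsicBall G ω x n = ↑(BF.filter (fun y => y ∈ intrinsicBall G ω x n)) := by
      ext z
      simp only [Finset.coe_filter, Set.mem_setOf_eq]
      exact ⟨fun h => ⟨hsub h, h⟩, fun h => h.2⟩
    rw [show (∑ y ∈ BF, Set.indicator (A y) (fun _ => (1:ℝ≥0∞)) ω)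
        = ∑ y ∈ BF, (if y ∈ intrinsicBall G ω x n then 1 else 0) from
      Finset.sum_congr rfl fun y _ => by
        rw [Set.indicator_apply]
        congr 1]
    have henc : (intrinsicBall G ω x n).encard
        = ((BF.filter (fun y => y ∈ intrinsicBall G ω x n)).card : ℕ∞) := by
      conv_lhs => rw [hset]
      exact Set.encard_coe_eq_coe_finsetCard _
    rw [Finset.sum_boole, henc]
    simp only [ENat.toENNReal_coe]
  have hsum : ∀ m : Measure (Sym2 V → Bool),
      (∫⁻ ω, ((intrinsicBall G ω x n).encard : ℝ≥0∞) ∂m) = ∑ y ∈ BF, m (A y) := by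
    intro m
    rw [lintegral_congr (hptwise m)]
    rw [lintegral_finset_sum BF (f := fun y => Set.indicator (A y) (fun _ => (1:ℝ≥0∞)))
      (fun y _ => measurable_one.indicator (hAmeas y))]
    exact Finset.sum_congr rfl fun y _ => lintegral_indicator_one (hAmeas y)
  -- q-side bound
  have hqside : ∑ y ∈ BF, μ q (A y) ≤ (C₁ : ℝ≥0∞) * (ENNReal.ofReal (p_c - q))⁻¹ := by
    rw [← hsum (μ q)]
    refine le_trans (lintegral_mono fun ω => ?_) (hC₁ q hq0.le hqlt)
    have hmono : intrinsicBall G ω x n ⊆ cluster G ω x := by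
      rintro y ⟨w, -⟩
      exact ⟨w⟩
    exact ENat.toENNReal_le.mpr (Set.encard_mono hmono)
  -- assemble
  rw [hsum (μ p_c)]
  calc ∑ y ∈ BF, μ p_c (A y)
      ≤ ∑ y ∈ BF, (ENNReal.ofReal p_c / ENNReal.ofReal q) ^ n * μ q (A y) :=
        Finset.sum_le_sum fun y _ => hratio y
    _ = (ENNReal.ofReal p_c / ENNReal.ofReal q) ^ n * ∑ y ∈ BF, μ q (A y) := by
        rw [Finset.mul_sum]
    _ ≤ 2 * ((C₁ : ℝ≥0∞) * (ENNReal.ofReal (p_c - q))⁻¹) := by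
        apply mul_le_mul' ?_ hqside
        -- ratio bound
        rw [← ENNReal.ofReal_div_of_pos hq0, ← ENNReal.ofReal_pow (by positivity)]
        rw [show (2:ℝ≥0∞) = ENNReal.ofReal 2 by simp]
        apply ENNReal.ofReal_le_ofReal
        have hbern : (1:ℝ)/2 ≤ (1 - 1/(2*n)) ^ n := by
          have h2n : (1:ℝ) ≤ n := by exact_mod_cast hn
          have h1 : (-2:ℝ) ≤ -(1/(2*n)) := by
            have : (1:ℝ)/(2*n) ≤ 1/2 := one_div_le_one_div_of_le (by norm_num) (by linarith)
            linarith
          have := one_add_mul_le_pow h1 n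
          have hn0 : (n:ℝ) ≠ 0 := by positivity
          have hcast : 1 + (n:ℝ) * (-(1/(2*n))) = 1/2 := by
            field_simp
            ring
          rw [hcast] at this
          rw [sub_eq_add_neg]; exact this
        have hppos : (0:ℝ) < 1 - 1/(2*n) := by linarith
        have hdivpow : (p_c / q) ^ n = ((1 - 1/(2*(n:ℝ))) ^ n)⁻¹ := by
          rw [hqdef]
          rw [show p_c / (p_c * (1 - 1/(2*(n:ℝ)))) = (1 - 1/(2*(n:ℝ)))⁻¹ by
            rw [div_mul_eq_div_div, div_self hpc0.ne', one_div]]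
          rw [inv_pow]
        rw [hdivpow]
        rw [inv_le_comm₀ (by positivity) (by norm_num)]
        linarith
    _ ≤ ((4 * C₁ * (Real.toNNReal p_c)⁻¹ : ℝ≥0) : ℝ≥0∞) * n := by
        have hsub : p_c - q = p_c * (1/(2*n)) := by rw [hqdef]; ring
        rw [hsub]
        have h2n0 : (0:ℝ) < p_c * (1/(2*n)) := by positivity
        rw [← ENNReal.ofReal_inv_of_pos h2n0]
        have hinv : (p_c * (1/(2*(n:ℝ))))⁻¹ = (2*n) * p_c⁻¹ := by
          field_simp
        rw [hinv]
        rw [ENNReal.ofReal_mul (by positivity)]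
        rw [show ENNReal.ofReal (2*(n:ℝ)) = 2 * n by
          rw [ENNReal.ofReal_mul (by norm_num)]
          simp [ENNReal.ofReal_natCast]]
        rw [ENNReal.ofReal_inv_of_pos hpc0]
        have hnn0 : Real.toNNReal p_c ≠ 0 := by
          simp only [ne_eq, Real.toNNReal_eq_zero, not_le]
          exact hpc0
        have hc : ((4 * C₁ * (Real.toNNReal p_c)⁻¹ : ℝ≥0) : ℝ≥0∞)
            = 4 * (C₁ : ℝ≥0∞) * (ENNReal.ofReal p_c)⁻¹ := by
          push_cast [ENNReal.coe_inv hnn0]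
          rfl
        rw [hc]
        apply le_of_eq
        ring
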